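/- Let l : {1,2,3,…} → ℝ satisfy l(a·b) = l(a) + l(b) for all positive integers a, b, and suppose that l(n+1) − l(n) + l(n+1)/n → 0 as n → ∞. Then there exists a real constant c such that l(n) = c·ln n for all positive integers n. (Indeed, by Mercer's theorem applied to aₙ = l(n+1) − l(n), whose partial sums are sₙ = l(n+1) − l(1) = l(n+1), the hypothesis forces l(n+1) − l(n) → 0, and the completely additive hypothesis then gives l(n) = c·ln n.) -/

import Mathlib

open Filter Topology Finset

private lemma erdos_key (l : ℕ → ℝ)
    (h_add : ∀ a b : ℕ, 0 < a → 0 < b → l (a * b) = l a + l b)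
    (ha : Tendsto (fun n : ℕ => l (n + 1) - l n) atTop (nhds 0))
    (m : ℕ) (hm : 2 ≤ m) :
    Tendsto (fun N : ℕ => l N / Real.log N) atTop
      (nhds (l m / Real.log m)) := by
  have hl1 : l 1 = 0 := by have h := h_add 1 1 one_pos one_pos; simp at h; linarith
  have hm1 : (1:ℝ) < (m:ℝ) := by exact_mod_cast hm
  have hm0 : (0:ℝ) < Real.log m := Real.log_pos hm1
  set c : ℝ := l m / Real.log m with hc
  set g : ℕ → ℝ := fun n => l n - c * Real.log n with hg
  have hgm : ∀ q : ℕ, 0 < q → g (m * q) = g q := by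
    intro q hq
    have hmq : (0:ℝ) < (m:ℝ) := by linarith
    have hqq : (0:ℝ) < (q:ℝ) := by exact_mod_cast hq
    have hlog : Real.log ((m * q : ℕ) : ℝ) = Real.log m + Real.log q := by
      push_cast
      exact Real.log_mul hmq.ne' hqq.ne'
    have hadd := h_add m q (by omega) hq
    simp only [hg, hadd, hlog]
    have : c * Real.log m = l m := by
      rw [hc]; field_simp
    ring_nf
    ring_nf at this
    linarith
  -- Step A
  have stepA : ∀ ε : ℝ, 0 < ε → ∃ K : ℕ, 1 ≤ K ∧
      ∀ q ≥ K, ∀ r < m, |g (m * q + r) - g q| ≤ ε := by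
    intro ε hε
    have hmpos : (0:ℝ) < (m:ℝ) := by linarith
    obtain ⟨K1, hK1⟩ := (Metric.tendsto_atTop.mp ha) (ε / (2 * m))
      (by positivity)
    set K2 : ℕ := ⌈2 * |c| / ε⌉₊ + 1 with hK2def
    refine ⟨max (max K1 K2) 1, le_max_right _ _, ?_⟩
    intro q hq r hr
    have hqK1 : K1 ≤ q := le_trans (le_trans (le_max_left _ _) (le_max_left _ _)) hq
    have hqK2 : K2 ≤ q := le_trans (le_trans (le_max_right _ _) (le_max_left _ _)) hq
    have hq1 : 1 ≤ q := le_trans (le_max_right _ _) hq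
    have hqpos : (0:ℝ) < (q:ℝ) := by exact_mod_cast hq1
    -- rewrite g q as g (m*q)
    rw [← hgm q hq1]
    -- part 1 : |l (m*q+r) - l (m*q)| ≤ ε/2
    have htel : l (m * q + r) - l (m * q) =
        ∑ j ∈ range r, (l (m * q + j + 1) - l (m * q + j)) := by
      have := Finset.sum_range_sub (fun j => l (m * q + j)) r
      simpa [add_assoc] using this.symm
    have hpart1 : |l (m * q + r) - l (m * q)| ≤ ε / 2 := by
      rw [htel]
      calc |∑ j ∈ range r, (l (m * q + j + 1) - l (m * q + j))|
          ≤ ∑ j ∈ range r, |l (m * q + j + 1) - l (m * q + j)| :=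
            Finset.abs_sum_le_sum_abs _ _
        _ ≤ ∑ j ∈ range r, (ε / (2 * m)) := by
            apply Finset.sum_le_sum
            intro j hj
            have hidx : K1 ≤ m * q + j := by
              have : q ≤ m * q := Nat.le_mul_of_pos_left q (by omega)
              omega
            have := hK1 (m * q + j) hidx
            rw [Real.dist_eq, sub_zero] at this
            exact this.le
        _ = r * (ε / (2 * m)) := by
            rw [Finset.sum_const, Finset.card_range, nsmul_eq_mul]
        _ ≤ m * (ε / (2 * m)) := by
            apply mul_le_mul_of_nonneg_right _ (by positivity)
            exact_mod_cast hr.le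
        _ = ε / 2 := by field_simp
    -- part 2 : |c| * (log (m*q+r) - log (m*q)) ≤ ε/2
    have hmqpos : (0:ℝ) < ((m * q : ℕ) : ℝ) := by
      push_cast; positivity
    have hmqrpos : (0:ℝ) < ((m * q + r : ℕ) : ℝ) := by
      push_cast; positivity
    have hle : ((m * q : ℕ) : ℝ) ≤ ((m * q + r : ℕ) : ℝ) := by
      exact_mod_cast Nat.le_add_right _ _
    have hlogdiff0 : 0 ≤ Real.log ((m * q + r : ℕ) : ℝ) - Real.log ((m * q : ℕ) : ℝ) := by
      have := Real.log_le_log hmqpos hle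
      linarith
    have hlogdiff : Real.log ((m * q + r : ℕ) : ℝ) - Real.log ((m * q : ℕ) : ℝ) ≤ 1 / q := by
      rw [← Real.log_div hmqrpos.ne' hmqpos.ne']
      have h1 := Real.log_le_sub_one_of_pos (div_pos hmqrpos hmqpos)
      have h2 : ((m * q + r : ℕ) : ℝ) / ((m * q : ℕ) : ℝ) - 1 ≤ 1 / q := by
        rw [div_sub_one hmqpos.ne', div_le_div_iff₀ hmqpos hqpos]
        push_cast
        have : (r:ℝ) ≤ (m:ℝ) := by exact_mod_cast hr.le
        nlinarith
      linarith
    have hK2q : 2 * |c| / ε ≤ (q:ℝ) := by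
      have h1 : 2 * |c| / ε ≤ (⌈2 * |c| / ε⌉₊ : ℝ) := Nat.le_ceil _
      have h2 : ((⌈2 * |c| / ε⌉₊ : ℕ) : ℝ) ≤ (q:ℝ) := by
        exact_mod_cast le_trans (by omega) hqK2
      linarith
    have hpart2 : |c| * (Real.log ((m * q + r : ℕ) : ℝ) - Real.log ((m * q : ℕ) : ℝ)) ≤ ε / 2 := by
      have h1 : |c| * (Real.log ((m * q + r : ℕ) : ℝ) - Real.log ((m * q : ℕ) : ℝ))
          ≤ |c| * (1 / q) := mul_le_mul_of_nonneg_left hlogdiff (abs_nonneg c)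
      have h2 : |c| * (1 / q) ≤ ε / 2 := by
        rw [mul_one_div, div_le_div_iff₀ hqpos (by norm_num : (0:ℝ) < 2)]
        have := mul_le_mul_of_nonneg_left hK2q hε.le
        calc |c| * 2 = ε * (2 * |c| / ε) := by field_simp
          _ ≤ ε * q := this
      linarith
    -- combine
    have hdecomp : g (m * q + r) - g (m * q) =
        (l (m * q + r) - l (m * q)) -
          c * (Real.log ((m * q + r : ℕ) : ℝ) - Real.log ((m * q : ℕ) : ℝ)) := by
      simp only [hg]; ring
    rw [hdecomp]
    calc |(l (m * q + r) - l (m * q)) -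
          c * (Real.log ((m * q + r : ℕ) : ℝ) - Real.log ((m * q : ℕ) : ℝ))|
        ≤ |l (m * q + r) - l (m * q)| +
          |c * (Real.log ((m * q + r : ℕ) : ℝ) - Real.log ((m * q : ℕ) : ℝ))| :=
          abs_sub _ _
      _ ≤ ε / 2 + ε / 2 := by
          apply add_le_add hpart1
          rw [abs_mul, abs_of_nonneg hlogdiff0]
          exact hpart2
      _ = ε := by ring
  -- Step B : inductive bound
  have stepB : ∀ ε : ℝ, 0 < ε → ∀ K : ℕ, 1 ≤ K →
      (∀ q ≥ K, ∀ r < m, |g (m * q + r) - g q| ≤ ε) →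
      ∃ D : ℝ, 0 ≤ D ∧ ∀ N : ℕ, 1 ≤ N →
        |g N| ≤ D + ε * (Real.log N / Real.log m) := by
    intro ε hε K hK hA
    have hMK : 0 < m * K := Nat.mul_pos (by omega) hK
    have hmem1 : (1:ℕ) ∈ Finset.Icc 1 (m * K) := Finset.mem_Icc.mpr ⟨le_refl 1, hMK⟩
    have hne : (Finset.Icc 1 (m * K)).Nonempty := ⟨1, hmem1⟩
    set D : ℝ := (Finset.Icc 1 (m * K)).sup' hne (fun n => |g n|) with hD
    have hD0 : 0 ≤ D := by
      have h1 : |g 1| ≤ D := Finset.le_sup' (fun n => |g n|) hmem1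
      exact le_trans (abs_nonneg _) h1
    refine ⟨D, hD0, ?_⟩
    intro N
    induction N using Nat.strong_induction_on with
    | _ N ih =>
      intro hN
      by_cases hsmall : N ≤ m * K
      · have h1 : |g N| ≤ D :=
          Finset.le_sup' (fun n => |g n|) (Finset.mem_Icc.mpr ⟨hN, hsmall⟩)
        have h2 : 0 ≤ Real.log N / Real.log m :=
          div_nonneg (Real.log_natCast_nonneg N) hm0.le
        nlinarith
      · push_neg at hsmall
        set q : ℕ := N / m with hqdef
        have hqK : K ≤ q := by
          rw [hqdef]
          exact Nat.le_div_iff_mul_le (by omega) |>.mpr (by rw [Nat.mul_comm]; omega)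
        have hq1 : 1 ≤ q := le_trans hK hqK
        have hmod : m * q + N % m = N := Nat.div_add_mod N m
        have hrm : N % m < m := Nat.mod_lt _ (by omega)
        have hqN : q < N := Nat.div_lt_self (by omega) (by omega)
        have hstep : |g N - g q| ≤ ε := by
          have := hA q hqK (N % m) hrm
          rwa [hmod] at this
        have hrec := ih q hqN hq1
        have hlogq : Real.log q + Real.log m ≤ Real.log N := by
          have hqpos : (0:ℝ) < (q:ℝ) := by exact_mod_cast hq1
          have hmpos : (0:ℝ) < (m:ℝ) := by positivity
          rw [← Real.log_mul hqpos.ne' hmpos.ne']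
          apply Real.log_le_log (by positivity)
          have hqm : q * m ≤ N := by rw [Nat.mul_comm]; omega
          exact_mod_cast hqm
        have h3 : Real.log q / Real.log m + 1 ≤ Real.log N / Real.log m := by
          rw [div_add_one hm0.ne']
          exact div_le_div_of_nonneg_right hlogq hm0.le
        have h4 : |g N| ≤ |g q| + ε := by
          calc |g N| = |(g N - g q) + g q| := by congr 1; ring
            _ ≤ |g N - g q| + |g q| := abs_add_le _ _
            _ ≤ ε + |g q| := by linarith
            _ = |g q| + ε := by ring
        nlinarith [mul_le_mul_of_nonneg_left h3 hε.le]
  -- Step C : conclusion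
  rw [Metric.tendsto_atTop]
  intro δ hδ
  set ε : ℝ := δ * Real.log m / 2 with hεdef
  have hε : 0 < ε := by positivity
  obtain ⟨K, hK1, hA⟩ := stepA ε hε
  obtain ⟨D, hD0, hB⟩ := stepB ε hε K hK1 hA
  set N0 : ℕ := max 2 (⌈Real.exp (2 * D / δ)⌉₊ + 1) with hN0
  refine ⟨N0, ?_⟩
  intro N hN
  have hN2 : 2 ≤ N := le_trans (le_max_left _ _) hN
  have hNpos : (0:ℝ) < (N:ℝ) := by
    have : (0:ℕ) < N := by omega
    exact_mod_cast this
  have hlogN : 0 < Real.log N := Real.log_pos (by exact_mod_cast hN2)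
  have hexpN : Real.exp (2 * D / δ) < (N:ℝ) := by
    have h1 : (⌈Real.exp (2 * D / δ)⌉₊ + 1 : ℕ) ≤ N := le_trans (le_max_right _ _) hN
    have h2 : Real.exp (2 * D / δ) ≤ (⌈Real.exp (2 * D / δ)⌉₊ : ℝ) := Nat.le_ceil _
    have h3 : ((⌈Real.exp (2 * D / δ)⌉₊ + 1 : ℕ) : ℝ) ≤ (N:ℝ) := by exact_mod_cast h1
    push_cast at h3
    linarith
  have hlogbig : 2 * D / δ < Real.log N := (Real.lt_log_iff_exp_lt hNpos).mpr hexpN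
  have hDbound : D < δ * Real.log N / 2 := by
    rw [div_lt_iff₀ hδ] at hlogbig
    linarith
  have hgN := hB N (by omega)
  have he1 : ε * (Real.log N / Real.log m) = δ * Real.log N / 2 := by
    rw [hεdef]; field_simp
  rw [he1] at hgN
  have hdist : l N / Real.log N - c = g N / Real.log N := by
    rw [hg]
    field_simp
  rw [Real.dist_eq, hdist, abs_div, abs_of_pos hlogN, div_lt_iff₀ hlogN]
  calc |g N| ≤ D + δ * Real.log N / 2 := hgN
    _ < δ * Real.log N / 2 + δ * Real.log N / 2 := by linarith
    _ = δ * Real.log N := by ring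

/-- If `l : {1,2,…} → ℝ` is completely additive (`l (a·b) = l a + l b` for
all positive integers) and `l (n+1) - l n + l (n+1)/n → 0` as `n → ∞`, then
`l n = c · ln n` for some real constant `c`. -/
theorem completely_additive_log_of_mercer_condition
    (l : ℕ → ℝ)
    (h_add : ∀ a b : ℕ, 0 < a → 0 < b → l (a * b) = l a + l b)
    (h_lim : Tendsto (fun n : ℕ => l (n + 1) - l n + l (n + 1) / n) atTop
      (nhds 0)) :
    ∃ c : ℝ, ∀ n : ℕ, 0 < n → l n = c * Real.log n := by
  have hl1 : l 1 = 0 := by have h := h_add 1 1 one_pos one_pos; simp at h; linarith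
  set b : ℕ → ℝ := fun n => l (n + 1) - l n + l (n + 1) / n with hbdef
  -- telescoping identity
  have hterm : ∀ k : ℕ, (k:ℝ) * b k = ((k:ℝ) + 1) * l (k + 1) - (k:ℝ) * l k := by
    intro k
    rcases Nat.eq_zero_or_pos k with h0 | h1
    · subst h0; simp [hbdef, hl1]
    · have hk : (k:ℝ) ≠ 0 := by
        have : (0:ℝ) < (k:ℝ) := by exact_mod_cast h1
        exact this.ne'
      simp only [hbdef]
      field_simp
      ring
  have htel : ∀ n : ℕ, (n:ℝ) * l n = ∑ k ∈ range n, (k:ℝ) * b k := by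
    intro n
    have h1 := Finset.sum_range_sub (fun k => (k:ℝ) * l k) n
    simp only [Nat.cast_zero, zero_mul, sub_zero] at h1
    rw [← h1]
    apply Finset.sum_congr rfl
    intro k _
    rw [hterm k]
    push_cast
    ring
  -- Cesàro : (1/n) ∑ |b k| → 0
  have habs : Tendsto (fun n : ℕ => |b n|) atTop (nhds 0) := by
    have := h_lim.abs
    simpa using this
  have hcesaro : Tendsto (fun n : ℕ => (n:ℝ)⁻¹ * ∑ k ∈ range n, |b k|) atTop (nhds 0) :=
    habs.cesaro
  -- l n / n → 0
  have hln : Tendsto (fun n : ℕ => l n / n) atTop (nhds 0) := by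
    apply squeeze_zero_norm _ hcesaro
    intro n
    rcases Nat.eq_zero_or_pos n with h0 | h1
    · subst h0
      simp
    · have hnpos : (0:ℝ) < (n:ℝ) := by exact_mod_cast h1
      have h2 : |(n:ℝ) * l n| ≤ (n:ℝ) * ∑ k ∈ range n, |b k| := by
        rw [htel n]
        calc |∑ k ∈ range n, (k:ℝ) * b k| ≤ ∑ k ∈ range n, |(k:ℝ) * b k| :=
              Finset.abs_sum_le_sum_abs _ _
          _ ≤ ∑ k ∈ range n, (n:ℝ) * |b k| := by
              apply Finset.sum_le_sum
              intro k hk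
              rw [abs_mul, Nat.abs_cast]
              apply mul_le_mul_of_nonneg_right _ (abs_nonneg _)
              have : k ≤ n := (Finset.mem_range.mp hk).le
              exact_mod_cast this
          _ = (n:ℝ) * ∑ k ∈ range n, |b k| := by rw [Finset.mul_sum]
      rw [abs_mul, Nat.abs_cast] at h2
      have hsum0 : 0 ≤ ∑ k ∈ range n, |b k| :=
        Finset.sum_nonneg fun k _ => abs_nonneg _
      have h3 : |l n| ≤ ∑ k ∈ range n, |b k| :=
        le_of_mul_le_mul_left (by linarith) hnpos
      rw [Real.norm_eq_abs, abs_div, Nat.abs_cast, div_le_iff₀ hnpos]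
      calc |l n| ≤ ∑ k ∈ range n, |b k| := h3
        _ = (n:ℝ)⁻¹ * (∑ k ∈ range n, |b k|) * n := by field_simp
  -- l (n+1) / n → 0
  have hln1 : Tendsto (fun n : ℕ => l (n + 1) / ((n:ℝ) + 1)) atTop (nhds 0) := by
    have h1 := hln.comp (tendsto_add_atTop_nat 1)
    have : (fun n : ℕ => l n / n) ∘ (fun n => n + 1) =
        fun n : ℕ => l (n + 1) / ((n:ℝ) + 1) := by
      funext n; simp [Function.comp]
    rwa [this] at h1
  have hratio : Tendsto (fun n : ℕ => ((n:ℝ) + 1) / n) atTop (nhds 1) := by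
    have h1 : Tendsto (fun n : ℕ => 1 + 1 / (n:ℝ)) atTop (nhds 1) := by
      have := tendsto_one_div_atTop_nhds_zero_nat (𝕜 := ℝ)
      have h2 := this.const_add 1
      simpa using h2
    apply h1.congr'
    filter_upwards [eventually_ge_atTop 1] with n hn
    have hnpos : (0:ℝ) < (n:ℝ) := by exact_mod_cast hn
    field_simp
  have hterm2 : Tendsto (fun n : ℕ => l (n + 1) / n) atTop (nhds 0) := by
    have h1 := hln1.mul hratio
    rw [zero_mul] at h1
    apply h1.congr'
    filter_upwards [eventually_ge_atTop 1] with n hn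
    have hnpos : (0:ℝ) < (n:ℝ) := by exact_mod_cast hn
    field_simp
  have ha : Tendsto (fun n : ℕ => l (n + 1) - l n) atTop (nhds 0) := by
    have h1 := h_lim.sub hterm2
    rw [sub_zero] at h1
    apply h1.congr
    intro n
    simp [hbdef]
  -- conclusion via erdos_key
  refine ⟨l 2 / Real.log 2, ?_⟩
  intro n hn
  rcases eq_or_lt_of_le (show 1 ≤ n from hn) with h1 | h2
  · rw [← h1]
    simp [hl1]
  · have hn2 : 2 ≤ n := h2
    have k2 := erdos_key l h_add ha 2 (le_refl 2)
    have kn := erdos_key l h_add ha n hn2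
    have heq : l n / Real.log n = l 2 / Real.log 2 := tendsto_nhds_unique kn k2
    have hlogn : Real.log n ≠ 0 := by
      have : (1:ℝ) < (n:ℝ) := by exact_mod_cast hn2
      exact (Real.log_pos this).ne'
    rw [← heq]
    field_simp
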